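/- Let w be a word of length n! over Σ_n. Then w is a universal Lyndon word of degree n if and only if every conjugate v of w is a Lyndon word with respect to the order ⊲_v that v defines (the order of first occurrences of the letters in v). -/

import Mathlib

/-- `v` is a conjugate (cyclic rotation) of `w` : `w = w₁w₂` and `v = w₂w₁`. -/
def IsConjugate {α : Type*} (w v : List α) : Prop :=
  ∃ w₁ w₂ : List α, w = w₁ ++ w₂ ∧ v = w₂ ++ w₁

/-- `u` is a cyclic factor of `w` : `u` is a factor of `ww` and `|u| ≤ |w|`. -/
def IsCyclicFactor {α : Type*} (w u : List α) : Prop :=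
  u <:+: (w ++ w) ∧ u.length ≤ w.length

/-- The number of occurrences of `u` as a cyclic factor of `w`, i.e. the number of
occurrences of `u` in `ww` beginning at one of the first `|w|` positions. -/
def cyclicOcc {α : Type*} [DecidableEq α] (w u : List α) : ℕ :=
  ((Finset.range w.length).filter fun i => u <+: (w ++ w).drop i).card

/-- `w` is lexicographically strictly smaller, with respect to the lexicographic order
induced by the order `r` on the letters, than all of its proper conjugates. -/
def IsLyndonWith {n : ℕ} (r : Fin n → Fin n → Prop) (w : List (Fin n)) : Prop :=
  ∀ w₁ w₂ : List (Fin n), w = w₁ ++ w₂ → w₁ ≠ [] → w₂ ≠ [] →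
    List.Lex r w (w₂ ++ w₁)

/-- `w` is a Lyndon word: it is Lyndon with respect to some total order on the alphabet. -/
def IsLyndon {n : ℕ} (w : List (Fin n)) : Prop :=
  ∃ r : Fin n → Fin n → Prop, IsStrictTotalOrder (Fin n) r ∧ IsLyndonWith r w

/-- A universal Lyndon word of degree `n` : a word over `Σ_n` of length `n!`
all of whose conjugates are Lyndon words. -/
def IsULW (n : ℕ) (w : List (Fin n)) : Prop :=
  w.length = Nat.factorial n ∧ ∀ v, IsConjugate w v → IsLyndon v

/-- The partial alphabet order `⊲_u` defined by the word `u` : `i ⊲_u j` iff `i` occurs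
in `u` and either `j` does not occur in `u`, or the first occurrence of `i` in `u`
precedes the first occurrence of `j` in `u`. -/
def wordOrder {n : ℕ} (u : List (Fin n)) (i j : Fin n) : Prop :=
  i ∈ u ∧ u.idxOf i < u.idxOf j

/- ---------- auxiliary lemmas ---------- -/

lemma lex_mono {α : Type*} {r s : α → α → Prop} (h : ∀ a b, r a b → s a b) :
    ∀ {l₁ l₂ : List α}, List.Lex r l₁ l₂ → List.Lex s l₁ l₂ := by
  intro l₁ l₂ hl
  induction hl with
  | nil => exact List.Lex.nil
  | cons _ ih => exact List.Lex.cons ih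
  | rel hr => exact List.Lex.rel (h _ _ hr)

lemma lex_of_rel {α : Type*} {r : α → α → Prop} (p : List α) {a b : α}
    (s t : List α) (hab : r a b) : List.Lex r (p ++ a :: s) (p ++ b :: t) := by
  induction p with
  | nil => exact List.Lex.rel hab
  | cons x p ih => exact List.Lex.cons ih

lemma rel_of_lex_head {α : Type*} {r : α → α → Prop} {a b : α} {s t : List α}
    (h : List.Lex r (a :: s) (b :: t)) (hne : a ≠ b) : r a b := by
  cases h with
  | cons h' => exact absurd rfl hne
  | rel hr => exact hr

lemma rel_of_lex {α : Type*} {r : α → α → Prop} (hirr : ∀ x, ¬ r x x) :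
    ∀ (p : List α) {a b : α} (s t : List α),
      List.Lex r (p ++ a :: s) (p ++ b :: t) → a ≠ b → r a b := by
  intro p
  induction p with
  | nil =>
    intro a b s t h hne
    exact rel_of_lex_head h hne
  | cons x p ih =>
    intro a b s t h hne
    cases h with
    | cons h' => exact ih _ _ h' hne
    | rel hr => exact absurd hr (hirr x)

lemma lex_mismatch {α : Type*} {r : α → α → Prop} (hirr : ∀ x, ¬ r x x) :
    ∀ {l₁ l₂ : List α}, List.Lex r l₁ l₂ → l₁.length = l₂.length →
      ∃ (p : List α) (a : α) (s : List α) (b : α) (t : List α),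
        l₁ = p ++ a :: s ∧ l₂ = p ++ b :: t ∧ a ≠ b ∧ r a b := by
  intro l₁ l₂ h
  induction h with
  | nil => intro h; simp at h
  | @cons x l₁' l₂' h' ih =>
    intro hlen
    obtain ⟨p, a, s, b, t, h1, h2, hne, hr⟩ := ih (by simpa using hlen)
    exact ⟨x :: p, a, s, b, t, by simp [h1], by simp [h2], hne, hr⟩
  | @rel a l₁' b l₂' hr =>
    refine fun _ => ⟨[], a, l₁', b, l₂', rfl, rfl, ?_, hr⟩
    rintro rfl; exact hirr a hr

lemma idx_le_append {n : ℕ} (p : List (Fin n)) (a : Fin n) (s : List (Fin n)) :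
    (p ++ a :: s).idxOf a ≤ p.length := by
  induction p with
  | nil => simp
  | cons x p ih =>
    by_cases hx : x = a
    · simp [List.idxOf_cons, hx]
    · simpa [List.idxOf_cons, hx] using ih

lemma idx_inj {n : ℕ} {l : List (Fin n)} {a b : Fin n} (ha : a ∈ l) (hb : b ∈ l)
    (h : l.idxOf a = l.idxOf b) : a = b := by
  have ha' := List.idxOf_get (List.idxOf_lt_length_iff.mpr ha)
  have hb' := List.idxOf_get (List.idxOf_lt_length_iff.mpr hb)
  rw [← ha', ← hb']
  congr 1
  exact Fin.ext h

lemma indexOf_decomp {n : ℕ} {l : List (Fin n)} {b : Fin n} (hb : b ∈ l) :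
    ∃ x y, l = x ++ b :: y ∧ x.length = l.idxOf b := by
  have h1 : l.idxOf b < l.length := List.idxOf_lt_length_iff.mpr hb
  refine ⟨l.take (l.idxOf b), l.drop (l.idxOf b + 1), ?_,
    by rw [List.length_take]; omega⟩
  conv_lhs => rw [← List.take_append_drop (l.idxOf b) l]
  rw [List.drop_eq_getElem_cons h1,
    show l[l.idxOf b]'h1 = b by simpa using List.idxOf_get h1]

lemma lyndon_lex_rotate {n : ℕ} {q : Fin n → Fin n → Prop} {h : List (Fin n)}
    (hL : IsLyndonWith q h) {j : ℕ} (h0 : 0 < j) (hj : j < h.length) :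
    List.Lex q h (h.rotate j) := by
  rw [List.rotate_eq_drop_append_take hj.le]
  refine hL (h.take j) (h.drop j) (h.take_append_drop j).symm ?_ ?_
  · apply List.ne_nil_of_length_pos
    rw [List.length_take]; omega
  · apply List.ne_nil_of_length_pos
    rw [List.length_drop]; omega

/-- Key lemma: if every conjugate of `v` is a Lyndon word, then `v` is Lyndon with
respect to the order of first occurrences of its letters. -/
lemma lyndon_wordOrder {n : ℕ} (v : List (Fin n))
    (H : ∀ u, IsConjugate v u → IsLyndon u) : IsLyndonWith (wordOrder v) v := by
  intro v₁ v₂ hsplit h1 h2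
  obtain ⟨r, hSTO, hLv⟩ := H v ⟨v, [], by simp, by simp⟩
  have hirr : ∀ x, ¬ r x x := fun x => hSTO.toIrrefl.irrefl x
  have hlex : List.Lex r v (v₂ ++ v₁) := hLv v₁ v₂ hsplit h1 h2
  have hlen' : v.length = (v₂ ++ v₁).length := by
    rw [hsplit]; simp [Nat.add_comm]
  obtain ⟨p, a, s, b, t, hv, hc, hab_ne, _⟩ := lex_mismatch hirr hlex hlen'
  subst hv
  rw [hc]
  apply lex_of_rel
  -- show `wordOrder (p ++ a :: s) a b`
  by_contra hno
  have ha_mem : a ∈ p ++ a :: s := by simp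
  have hb_mem : b ∈ p ++ a :: s := by
    have hb' : b ∈ v₂ ++ v₁ := by rw [hc]; simp
    rw [hsplit]
    rcases List.mem_append.mp hb' with h' | h'
    · exact List.mem_append.mpr (Or.inr h')
    · exact List.mem_append.mpr (Or.inl h')
  have hidx : (p ++ a :: s).idxOf b < (p ++ a :: s).idxOf a := by
    rcases Nat.lt_trichotomy ((p ++ a :: s).idxOf a) ((p ++ a :: s).idxOf b)
      with h' | h' | h'
    · exact absurd ⟨ha_mem, h'⟩ hno
    · exact absurd (idx_inj ha_mem hb_mem h') hab_ne
    · exact h'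
  have hia : (p ++ a :: s).idxOf a ≤ p.length := idx_le_append p a s
  -- decompose the word at the first occurrence of b
  obtain ⟨x, y', hxy, hxlen⟩ := indexOf_decomp hb_mem
  have hxlt : x.length < p.length := by omega
  -- b occurs inside p : p = x ++ b :: y and y' = y ++ a :: s
  obtain ⟨y, hp, hy⟩ : ∃ y, p = x ++ b :: y ∧ y' = y ++ a :: s := by
    rcases List.append_eq_append_iff.mp hxy with ⟨l', hl1, hl2⟩ | ⟨l', hl1, hl2⟩
    · exfalso
      have : x.length = p.length + l'.length := by rw [hl1]; simp
      omega
    · cases l' with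
      | nil =>
        exfalso
        simp only [List.append_nil] at hl1
        rw [hl1] at hxlt
        exact lt_irrefl _ hxlt
      | cons c0 y =>
        rw [List.cons_append] at hl2
        obtain ⟨hb0, hy'⟩ : b = c0 ∧ y' = y ++ a :: s := by
          constructor
          · exact (List.cons.injEq _ _ _ _ ▸ hl2).1
          · exact (List.cons.injEq _ _ _ _ ▸ hl2).2
        exact ⟨y, by rw [hl1, ← hb0], hy'⟩
  have hvx : p ++ a :: s = x ++ (b :: (y ++ a :: s)) := by rw [hp]; simp
  have hcx : p ++ b :: t = x ++ (b :: (y ++ b :: t)) := by rw [hp]; simp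
  -- lengths
  have hLpos : 0 < v₁.length := List.length_pos_iff.mpr h1
  have hLlt : v₁.length < (p ++ a :: s).length := by
    rw [hsplit]
    have := List.length_pos_iff.mpr h2
    simp only [List.length_append]
    omega
  have hmlt : x.length ≤ (p ++ a :: s).length := by
    simp only [List.length_append]
    omega
  -- the three rotations
  have hcrot : (p ++ a :: s).rotate v₁.length = p ++ b :: t := by
    rw [hsplit, List.rotate_eq_drop_append_take (by rw [← hsplit]; exact hLlt.le),
      List.drop_left, List.take_left, ← hc]
  have hh : (p ++ a :: s).rotate x.length = (b :: (y ++ a :: s)) ++ x := by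
    rw [List.rotate_eq_drop_append_take hmlt, hvx, List.drop_left, List.take_left]
  have hh2 : (p ++ b :: t).rotate x.length = (b :: (y ++ b :: t)) ++ x := by
    have : x.length ≤ (p ++ b :: t).length := by
      simp only [List.length_append]; omega
    rw [List.rotate_eq_drop_append_take this, hcx, List.drop_left, List.take_left]
  have hconj_h : IsConjugate (p ++ a :: s) ((b :: (y ++ a :: s)) ++ x) :=
    ⟨x, b :: (y ++ a :: s), hvx, rfl⟩
  obtain ⟨q, hqSTO, hqL⟩ := H _ hconj_h
  have hqirr : ∀ z, ¬ q z z := fun z => hqSTO.toIrrefl.irrefl z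
  -- first comparison : h against h.rotate v₁.length, which equals h2
  have hE2 : ((b :: (y ++ a :: s)) ++ x).rotate v₁.length = (b :: (y ++ b :: t)) ++ x := by
    rw [← hh, List.rotate_rotate, Nat.add_comm, ← List.rotate_rotate, hcrot, hh2]
  have hlex2 : List.Lex q ((b :: (y ++ a :: s)) ++ x)
      (((b :: (y ++ a :: s)) ++ x).rotate v₁.length) := by
    refine lyndon_lex_rotate hqL hLpos ?_
    rw [← hh, List.length_rotate]
    exact hLlt
  rw [hE2] at hlex2
  have hlex2' : List.Lex q ((b :: y) ++ a :: (s ++ x)) ((b :: y) ++ b :: (t ++ x)) := by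
    simpa [List.append_assoc] using hlex2
  have hqab : q a b := rel_of_lex hqirr (b :: y) _ _ hlex2' hab_ne
  -- second comparison : rotate h to its first occurrence of a, getting q b a
  have ha_h : a ∈ (b :: (y ++ a :: s)) ++ x := by simp
  obtain ⟨x2, y2, hxy2, _⟩ := indexOf_decomp ha_h
  have hx2ne : x2 ≠ [] := by
    intro h0
    rw [h0] at hxy2
    simp only [List.nil_append, List.cons_append] at hxy2
    exact hab_ne ((List.cons.injEq _ _ _ _ ▸ hxy2).1).symm
  have hlex3 : List.Lex q ((b :: (y ++ a :: s)) ++ x) ((a :: y2) ++ x2) :=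
    hqL x2 (a :: y2) hxy2 hx2ne (by simp)
  have hlex3' : List.Lex q (b :: ((y ++ a :: s) ++ x)) (a :: (y2 ++ x2)) := by
    simpa [List.cons_append] using hlex3
  have hqba : q b a := rel_of_lex_head hlex3' (Ne.symm hab_ne)
  exact hqirr a (hqSTO.toIsTrans.trans a b a hqab hqba)

lemma conj_trans {α : Type*} {w v u : List α} (h1 : IsConjugate w v)
    (h2 : IsConjugate v u) : IsConjugate w u := by
  obtain ⟨w₁, w₂, hw, hv⟩ := h1
  obtain ⟨v₁, v₂, hv', hu⟩ := h2
  rw [hv] at hv'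
  rcases List.append_eq_append_iff.mp hv' with ⟨l, hl1, hl2⟩ | ⟨l, hl1, hl2⟩
  · -- v₁ = w₂ ++ l, w₁ = l ++ v₂
    exact ⟨l, v₂ ++ w₂, by rw [hw, hl2]; simp, by rw [hu, hl1]; simp⟩
  · -- w₂ = v₁ ++ l, v₂ = l ++ w₁
    exact ⟨w₁ ++ v₁, l, by rw [hw, hl1]; simp, by rw [hu, hl2]; simp⟩

/-- There is a strict total order extending the first-occurrence order of `v`. -/
lemma exists_total_extension {n : ℕ} (v : List (Fin n)) :
    ∃ r : Fin n → Fin n → Prop, IsStrictTotalOrder (Fin n) r ∧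
      ∀ i j, wordOrder v i j → r i j := by
  refine ⟨fun i j => v.idxOf i < v.idxOf j ∨ (v.idxOf i = v.idxOf j ∧ i < j),
    ?_, ?_⟩
  · refine { trichotomous := ?_, irrefl := ?_, trans := ?_ }
    · intro i j hij hji
      rcases Nat.lt_trichotomy (v.idxOf i) (v.idxOf j) with h | h | h
      · exact absurd (Or.inl h) hij
      · rcases lt_trichotomy i j with h' | h' | h'
        · exact absurd (Or.inr ⟨h, h'⟩) hij
        · exact h'
        · exact absurd (Or.inr ⟨h.symm, h'⟩) hji
      · exact absurd (Or.inl h) hji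
    · intro i h
      rcases h with h | ⟨_, h⟩
      · exact lt_irrefl _ h
      · exact lt_irrefl _ h
    · intro i j k hij hjk
      rcases hij with h1 | ⟨h1, h1'⟩ <;> rcases hjk with h2 | ⟨h2, h2'⟩
      · exact Or.inl (h1.trans h2)
      · exact Or.inl (h2 ▸ h1)
      · exact Or.inl (h1 ▸ h2)
      · exact Or.inr ⟨h1.trans h2, h1'.trans h2'⟩
  · intro i j ⟨_, h⟩
    exact Or.inl h

/-- Theorem: a word `w` of length `n!` over `Σ_n` is a universal Lyndon word iff every
conjugate `v` of `w` is Lyndon with respect to the order `⊲_v` that it defines. -/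
theorem stmt_5 (n : ℕ) (w : List (Fin n)) (hlen : w.length = Nat.factorial n) :
    IsULW n w ↔ ∀ v : List (Fin n), IsConjugate w v → IsLyndonWith (wordOrder v) v := by
  constructor
  · intro ⟨_, hULW⟩ v hconj
    exact lyndon_wordOrder v (fun u hu => hULW u (conj_trans hconj hu))
  · intro h
    refine ⟨hlen, fun v hconj => ?_⟩
    obtain ⟨r, hSTO, hext⟩ := exists_total_extension v
    exact ⟨r, hSTO, fun v₁ v₂ hs h1 h2 =>
      lex_mono hext (h v hconj v₁ v₂ hs h1 h2)⟩
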